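/- arXiv:2005.00996 — 4 statements merged into one kernel-verified Lean document; each statement's English description precedes it below -/
import Mathlib

section
/- Let Y be exponentially distributed with rate 1, and let a, α₁, α₂, ρ, γ̃_F, γ̃_N > 0 with α₂ - α₁ γ̃_F > 0. Then P(¬( a α₂ Y/(a α₁ Y + 1/ρ) ≥ γ̃_F and a α₁ ρ Y ≥ γ̃_N )) = 1 - e^{-ρ̃_m}, where ρ̃_m = max{ γ̃_F / ((α₂ - α₁ γ̃_F) a ρ), γ̃_N / (a α₁ ρ) }. -/
open MeasureTheory Real

/-- The law of an Exp(1) random variable: density e^(-y) on [0, ∞). -/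
noncomputable def expMeasure1 : MeasureTheory.Measure ℝ :=
  MeasureTheory.volume.withDensity fun y => ENNReal.ofReal (if 0 ≤ y then Real.exp (-y) else 0)

/-- Downlink NOMA outage probability of the near user: for Y ~ Exp(1),
P(¬(SINR_{N,F} ≥ γ̃_F ∧ SNR_N ≥ γ̃_N)) = 1 - e^(-ρ̃_m). -/
theorem stmt_8 (a α1 α2 ρ γF γN : ℝ) (ha : 0 < a) (hα1 : 0 < α1) (hα2 : 0 < α2)
    (hρ : 0 < ρ) (hγF : 0 < γF) (hγN : 0 < γN) (hcond : 0 < α2 - α1 * γF) :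
    (expMeasure1 {y : ℝ |
        ¬(γF ≤ a * α2 * y / (a * α1 * y + 1 / ρ) ∧ γN ≤ a * α1 * ρ * y)}).toReal
      = 1 - Real.exp (-(max (γF / ((α2 - α1 * γF) * a * ρ)) (γN / (a * α1 * ρ)))) := by
  set m : ℝ := max (γF / ((α2 - α1 * γF) * a * ρ)) (γN / (a * α1 * ρ)) with hm
  have hc : 0 < (α2 - α1 * γF) * a * ρ := by positivity
  have hd : 0 < a * α1 * ρ := by positivity
  have hm1 : 0 < γF / ((α2 - α1 * γF) * a * ρ) := by positivity
  have hmpos : 0 < m := lt_of_lt_of_le hm1 (le_max_left _ _)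
  -- set equality
  have hset : {y : ℝ |
      ¬(γF ≤ a * α2 * y / (a * α1 * y + 1 / ρ) ∧ γN ≤ a * α1 * ρ * y)} = Set.Iio m := by
    ext y
    simp only [Set.mem_setOf_eq, Set.mem_Iio, ← not_le, not_iff_not]
    constructor
    · intro h
      obtain ⟨h1, h2⟩ := h
      have hy : 0 < y := by
        by_contra hy
        push_neg at hy
        nlinarith
      have hD : 0 < a * α1 * y + 1 / ρ := by positivity
      rw [le_div_iff₀ hD] at h1
      refine max_le ?_ ?_
      · rw [div_le_iff₀ hc]
        have hρ' : (0:ℝ) < 1 / ρ := by positivity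
        have hρρ : ρ * (1/ρ) = 1 := by field_simp
        nlinarith
      · rw [div_le_iff₀ hd]; linarith
    · intro hmy
      have hy : 0 < y := lt_of_lt_of_le hmpos hmy
      have hD : 0 < a * α1 * y + 1 / ρ := by positivity
      constructor
      · rw [le_div_iff₀ hD]
        have h1 : γF / ((α2 - α1 * γF) * a * ρ) ≤ y := le_trans (le_max_left _ _) hmy
        rw [div_le_iff₀ hc] at h1
        have hρ' : (0:ℝ) < 1 / ρ := by positivity
        have hρρ : ρ * (1/ρ) = 1 := by field_simp
        nlinarith [mul_pos hρ hρ']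
      · have h2 : γN / (a * α1 * ρ) ≤ y := le_trans (le_max_right _ _) hmy
        rw [div_le_iff₀ hd] at h2
        linarith
  rw [hset]
  have hdens : (fun y : ℝ => ENNReal.ofReal (if 0 ≤ y then Real.exp (-y) else 0))
      = ProbabilityTheory.exponentialPDF 1 := by
    funext y
    rw [ProbabilityTheory.exponentialPDF_eq]
    simp
  have happ : expMeasure1 (Set.Iio m) = ∫⁻ y in Set.Iio m, ProbabilityTheory.exponentialPDF 1 y := by
    rw [expMeasure1, hdens, withDensity_apply _ measurableSet_Iio]
  rw [happ, Measure.restrict_congr_set Iio_ae_eq_Iic,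
    ProbabilityTheory.lintegral_exponentialPDF_eq_antiDeriv one_pos, if_pos hmpos.le]
  rw [ENNReal.toReal_ofReal (by nlinarith [Real.exp_le_one_iff.mpr (by linarith : -(1 * m) ≤ 0)])]
  norm_num
end

section
/- Let Z have CDF F_Z(z) = (m̃^K (4 m_s m_l)^{-m_s K}/Γ(2 m_s K)) γ(2 m_s K, 2√(m_s m_l) z) near 0, and let c, α₁, α₂, γ̃ > 0 with α₂ - α₁ γ̃ > 0. Set c̃ = √(γ̃/(c(α₂ - α₁ γ̃))). Then as ρ → ∞, P( c α₂ Z² / (c α₁ Z² + 1/ρ) < γ̃ ) = F_Z(c̃ ρ^{-1/2}) and this quantity is asymptotically equivalent to (m̃^K c̃^{2 m_s K} / Γ(2 m_s K + 1)) · ρ^{-m_s K}, i.e., the ratio tends to 1. -/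
open MeasureTheory Real Filter

noncomputable def lowerGamma (a x : ℝ) : ℝ := ∫ t in Set.Ioc (0:ℝ) x, t ^ (a - 1) * Real.exp (-t)

lemma integrableOn_glg {a : ℝ} (ha : 0 < a) {s : Set ℝ} (hs : s ⊆ Set.Ioi 0) :
    IntegrableOn (fun t : ℝ => t ^ (a - 1) * Real.exp (-t)) s := by
  have h1 : IntegrableOn (fun t : ℝ => Real.exp (-t) * t ^ (a - 1)) s :=
    (Real.GammaIntegral_convergent ha).mono_set hs
  have : (fun t : ℝ => t ^ (a - 1) * Real.exp (-t))
      = fun t : ℝ => Real.exp (-t) * t ^ (a - 1) := funext fun t => mul_comm _ _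
  rw [this]; exact h1

lemma integrableOn_rpow' {a : ℝ} (ha : 0 < a) (s t : ℝ) :
    IntegrableOn (fun u : ℝ => u ^ (a - 1)) (Set.Ioc s t) :=
  (intervalIntegral.intervalIntegrable_rpow' (by linarith : (-1:ℝ) < a - 1) (a := s) (b := t)).1

lemma integral_rpow_Ioc {a x : ℝ} (ha : 0 < a) (hx : 0 ≤ x) :
    ∫ t in Set.Ioc (0:ℝ) x, t ^ (a - 1) = x ^ a / a := by
  rw [← intervalIntegral.integral_of_le hx]
  rw [integral_rpow (Or.inl (by linarith))]
  rw [Real.zero_rpow (by linarith : a - 1 + 1 ≠ 0)]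
  have : a - 1 + 1 = a := by ring
  rw [this]; ring

lemma lowerGamma_le {a x : ℝ} (ha : 0 < a) (hx : 0 ≤ x) : lowerGamma a x ≤ x ^ a / a := by
  rw [lowerGamma, ← integral_rpow_Ioc ha hx]
  apply setIntegral_mono_on (integrableOn_glg ha Set.Ioc_subset_Ioi_self)
    (integrableOn_rpow' ha 0 x) measurableSet_Ioc
  intro t ht
  have h1 : Real.exp (-t) ≤ 1 := Real.exp_le_one_iff.mpr (by linarith [ht.1])
  have h2 : (0:ℝ) ≤ t ^ (a - 1) := Real.rpow_nonneg ht.1.le _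
  nlinarith

lemma le_lowerGamma {a x : ℝ} (ha : 0 < a) (hx : 0 ≤ x) :
    Real.exp (-x) * (x ^ a / a) ≤ lowerGamma a x := by
  rw [lowerGamma, ← integral_rpow_Ioc ha hx, ← integral_const_mul]
  apply setIntegral_mono_on ((integrableOn_rpow' ha 0 x).const_mul _)
    (integrableOn_glg ha Set.Ioc_subset_Ioi_self) measurableSet_Ioc
  intro t ht
  have h1 : Real.exp (-x) ≤ Real.exp (-t) := Real.exp_le_exp.mpr (by linarith [ht.2])
  have h2 : (0:ℝ) ≤ t ^ (a - 1) := Real.rpow_nonneg ht.1.le _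
  calc Real.exp (-x) * t ^ (a - 1) ≤ Real.exp (-t) * t ^ (a - 1) := by nlinarith
    _ = t ^ (a - 1) * Real.exp (-t) := mul_comm _ _

lemma rpow_sandwich {c x u y : ℝ} (hx : 0 < x) (hxu : x ≤ u) (huy : u ≤ y) :
    u ^ c ≤ x ^ c + y ^ c := by
  rcases le_or_gt 0 c with h | h
  · have h1 : u ^ c ≤ y ^ c := Real.rpow_le_rpow (by linarith) huy h
    have h2 : (0:ℝ) ≤ x ^ c := Real.rpow_nonneg hx.le _
    linarith
  · have h1 : u ^ c ≤ x ^ c := Real.rpow_le_rpow_of_nonpos hx hxu h.le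
    have h2 : (0:ℝ) ≤ y ^ c := Real.rpow_nonneg (by linarith) _
    linarith

lemma lowerGamma_diff_le {a s t : ℝ} (ha : 0 < a) (hs : 0 < s) (hst : s ≤ t) :
    lowerGamma a t - lowerGamma a s ≤ (s ^ (a-1) + t ^ (a-1)) * (t - s) := by
  have hsplit : lowerGamma a t = lowerGamma a s + ∫ u in Set.Ioc s t, u ^ (a-1) * Real.exp (-u) := by
    rw [lowerGamma, lowerGamma, ← setIntegral_union (Set.Ioc_disjoint_Ioc_of_le le_rfl) measurableSet_Ioc
      (integrableOn_glg ha Set.Ioc_subset_Ioi_self)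
      (integrableOn_glg ha (fun u hu => lt_of_lt_of_le hs hu.1.le)),
      Set.Ioc_union_Ioc_eq_Ioc hs.le hst]
  rw [hsplit]
  have hb : ∫ u in Set.Ioc s t, u ^ (a-1) * Real.exp (-u) ≤ (s ^ (a-1) + t ^ (a-1)) * (t - s) := by
    have := setIntegral_mono_on
      (integrableOn_glg ha (fun u hu => lt_of_lt_of_le hs hu.1.le) (s := Set.Ioc s t))
      (integrableOn_const measure_Ioc_lt_top.ne) measurableSet_Ioc
      (g := fun _ => s ^ (a-1) + t ^ (a-1)) ?_
    · refine this.trans ?_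
      rw [setIntegral_const, Real.volume_real_Ioc, smul_eq_mul]
      rw [max_eq_left (by linarith)]
      ring_nf; rfl
    · intro u hu
      have hu0 : 0 < u := lt_of_lt_of_le hs hu.1.le
      have he : Real.exp (-u) ≤ 1 := Real.exp_le_one_iff.mpr (by linarith)
      have h2 : (0:ℝ) ≤ u ^ (a - 1) := Real.rpow_nonneg hu0.le _
      have hkey : u ^ (a-1) ≤ s ^ (a-1) + t ^ (a-1) := rpow_sandwich hs hu.1.le hu.2
      show u ^ (a-1) * Real.exp (-u) ≤ s ^ (a-1) + t ^ (a-1)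
      nlinarith
  linarith

set_option maxHeartbeats 1000000 in
/-- High-SNR outage of the IRS-aided far user: for large ρ the outage probability equals
F_Z(c̃ ρ^(-1/2)) and is asymptotically m̃^K c̃^(2 m_s K)/Γ(2 m_s K + 1) ρ^(-m_s K), so the
diversity order is m_s K. -/
theorem stmt_10 (μ : Measure ℝ) [IsProbabilityMeasure μ] (hnn : μ (Set.Iio 0) = 0)
    (ms ml mt : ℝ) (K : ℕ) (hms : 0 < ms) (hml : 0 < ml) (hmt : 0 < mt) (hK : 0 < K)
    (c α1 α2 γ : ℝ) (hc : 0 < c) (hα1 : 0 < α1) (hα2 : 0 < α2) (hγ : 0 < γ)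
    (hcond : 0 < α2 - α1 * γ)
    (FZ : ℝ → ℝ)
    (hFZ : ∀ z, FZ z = mt ^ K * (4 * ms * ml) ^ (-(ms * (K:ℝ))) / Real.Gamma (2 * ms * (K:ℝ))
        * lowerGamma (2 * ms * (K:ℝ)) (2 * Real.sqrt (ms * ml) * z))
    (ε : ℝ) (hε : 0 < ε) (hcdf : ∀ z ∈ Set.Icc (0:ℝ) ε, (μ (Set.Iic z)).toReal = FZ z) :
    (∀ᶠ ρ in atTop, (μ {z : ℝ | c * α2 * z ^ 2 / (c * α1 * z ^ 2 + 1 / ρ) < γ}).toReal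
        = FZ (Real.sqrt (γ / (c * (α2 - α1 * γ))) * ρ ^ (-(1:ℝ)/2))) ∧
    Tendsto (fun ρ : ℝ =>
        (μ {z : ℝ | c * α2 * z ^ 2 / (c * α1 * z ^ 2 + 1 / ρ) < γ}).toReal
          / (mt ^ K * Real.sqrt (γ / (c * (α2 - α1 * γ))) ^ (2 * ms * (K:ℝ))
              / Real.Gamma (2 * ms * (K:ℝ) + 1) * ρ ^ (-(ms * (K:ℝ)))))
      atTop (nhds 1) := by
  set a : ℝ := 2 * ms * (K:ℝ) with ha_def
  have hKpos : (0:ℝ) < (K:ℝ) := by exact_mod_cast hK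
  have ha : 0 < a := by positivity
  set b : ℝ := 2 * Real.sqrt (ms * ml) with hb_def
  have hb : 0 < b := by positivity
  set ct : ℝ := Real.sqrt (γ / (c * (α2 - α1 * γ))) with hct_def
  have hctarg : 0 < γ / (c * (α2 - α1 * γ)) := by positivity
  have hct : 0 < ct := Real.sqrt_pos.mpr hctarg
  have hGa : 0 < Real.Gamma a := Real.Gamma_pos_of_pos ha
  set C1 : ℝ := mt ^ K * (4 * ms * ml) ^ (-(ms * (K:ℝ))) / Real.Gamma a with hC1_def
  have hC1 : 0 < C1 := by
    apply div_pos _ hGa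
    exact mul_pos (pow_pos hmt K) (Real.rpow_pos_of_pos (by positivity) _)
  have hFZ' : ∀ z, FZ z = C1 * lowerGamma a (b * z) := fun z => hFZ z
  -- CDF equality on (0, ε]
  have hIic : ∀ t : ℝ, 0 < t → t ≤ ε → (μ (Set.Iic t)).toReal = FZ t :=
    fun t h1 h2 => hcdf t ⟨h1.le, h2⟩
  -- no atoms on (0, ε]
  have hatom : ∀ t : ℝ, 0 < t → t ≤ ε → μ {t} = 0 := by
    intro t ht htε
    set M : ℝ := (b * (t/2)) ^ (a-1) + (b * t) ^ (a-1) with hM_def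
    have hM0 : 0 ≤ M := by
      have := Real.rpow_nonneg (by positivity : (0:ℝ) ≤ b * (t/2)) (a-1)
      have := Real.rpow_nonneg (by positivity : (0:ℝ) ≤ b * t) (a-1)
      positivity
    set L : ℝ := C1 * (2 * M) * b with hL_def
    have key : ∀ s ∈ Set.Ioo (t/2) t, (μ {t}).toReal ≤ L * (t - s) := by
      intro s hs
      have hs0 : 0 < s := lt_trans (by linarith) hs.1
      have step1 : (μ {t}).toReal ≤ (μ (Set.Ioc s t)).toReal :=
        ENNReal.toReal_mono (measure_ne_top μ _)
          (measure_mono (Set.singleton_subset_iff.mpr ⟨hs.2, le_rfl⟩))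
      have hunion : μ (Set.Iic s) + μ (Set.Ioc s t) = μ (Set.Iic t) := by
        rw [← measure_union (Set.Iic_disjoint_Ioc le_rfl) measurableSet_Ioc,
          Set.Iic_union_Ioc_eq_Iic hs.2.le]
      have step2 : (μ (Set.Ioc s t)).toReal = FZ t - FZ s := by
        have := congrArg ENNReal.toReal hunion
        rw [ENNReal.toReal_add (measure_ne_top μ _) (measure_ne_top μ _)] at this
        rw [hIic t ht htε, hIic s hs0 (by linarith [hs.2])] at this
        linarith
      have step3 : FZ t - FZ s ≤ L * (t - s) := by
        rw [hFZ' t, hFZ' s]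
        have hd := lowerGamma_diff_le ha (by positivity : 0 < b * s)
          (mul_le_mul_of_nonneg_left hs.2.le hb.le)
        have hbs : (b*s) ^ (a-1) ≤ M :=
          rpow_sandwich (by positivity) (mul_le_mul_of_nonneg_left (by linarith [hs.1]) hb.le)
            (mul_le_mul_of_nonneg_left hs.2.le hb.le)
        have hbt : (b*t) ^ (a-1) ≤ M :=
          rpow_sandwich (by positivity) (mul_le_mul_of_nonneg_left (by linarith) hb.le) le_rfl
        have hlgd : lowerGamma a (b*t) - lowerGamma a (b*s) ≤ 2 * M * (b * (t - s)) := by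
          refine hd.trans ?_
          have hbtbs : b*t - b*s = b*(t-s) := by ring
          rw [hbtbs]
          have hsum : (b*s) ^ (a-1) + (b*t) ^ (a-1) ≤ 2*M := by linarith
          have hnn : (0:ℝ) ≤ b*(t-s) := mul_nonneg hb.le (by linarith [hs.2])
          exact mul_le_mul_of_nonneg_right hsum hnn
        calc C1 * lowerGamma a (b*t) - C1 * lowerGamma a (b*s)
            = C1 * (lowerGamma a (b*t) - lowerGamma a (b*s)) := by ring
          _ ≤ C1 * (2*M*(b*(t-s))) := by
              exact mul_le_mul_of_nonneg_left hlgd hC1.le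
          _ = L * (t - s) := by rw [hL_def]; ring
      linarith
    have hle0 : (μ {t}).toReal ≤ 0 := by
      have hneb : (nhdsWithin t (Set.Iio t)).NeBot := inferInstance
      have htd : Tendsto (fun s : ℝ => L * (t - s)) (nhdsWithin t (Set.Iio t)) (nhds (L * (t - t))) :=
        ((continuous_const.mul (continuous_const.sub continuous_id)).tendsto t).mono_left
          nhdsWithin_le_nhds
      have : L * (t - t) = 0 := by ring
      rw [this] at htd
      refine ge_of_tendsto htd ?_
      filter_upwards [Ioo_mem_nhdsLT (by linarith : t/2 < t)] with s hs
      exact key s hs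
    have := le_antisymm hle0 ENNReal.toReal_nonneg
    rcases (ENNReal.toReal_eq_zero_iff _).mp this with h | h
    · exact h
    · exact absurd h (measure_ne_top μ _)
  -- measure of Ioo (-t) t equals FZ t
  have hIoo : ∀ t : ℝ, 0 < t → t ≤ ε → (μ (Set.Ioo (-t) t)).toReal = FZ t := by
    intro t ht htε
    have hsub : Set.Iic t ⊆ Set.Iic (-t) ∪ (Set.Ioo (-t) t ∪ {t}) := by
      intro x hx
      rcases le_or_gt x (-t) with h | h
      · exact Or.inl h
      · rcases eq_or_lt_of_le (Set.mem_Iic.mp hx) with h2 | h2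
        · exact Or.inr (Or.inr h2)
        · exact Or.inr (Or.inl ⟨h, h2⟩)
    have h1 : μ (Set.Iic t) ≤ μ (Set.Ioo (-t) t) := by
      calc μ (Set.Iic t) ≤ μ (Set.Iic (-t)) + (μ (Set.Ioo (-t) t) + μ {t}) :=
            le_trans (measure_mono hsub) (le_trans (measure_union_le _ _)
              (by gcongr; exact measure_union_le _ _))
        _ = μ (Set.Ioo (-t) t) := by
            have hneg : μ (Set.Iic (-t)) = 0 := by
              have hss : Set.Iic (-t) ⊆ Set.Iio 0 := fun x hx =>
                Set.mem_Iio.mpr (lt_of_le_of_lt (Set.mem_Iic.mp hx) (by linarith))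
              exact le_antisymm (le_trans (measure_mono hss) hnn.le) zero_le
            rw [hatom t ht htε, add_zero, hneg, zero_add]
    have h2 : μ (Set.Ioo (-t) t) ≤ μ (Set.Iic t) := measure_mono (fun x hx => hx.2.le)
    rw [le_antisymm h2 h1, hIic t ht htε]
  -- the outage set is an interval
  have hset : ∀ ρ : ℝ, 0 < ρ →
      {z : ℝ | c * α2 * z ^ 2 / (c * α1 * z ^ 2 + 1 / ρ) < γ}
        = Set.Ioo (-(ct * ρ ^ (-(1:ℝ)/2))) (ct * ρ ^ (-(1:ℝ)/2)) := by
    intro ρ hρ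
    set t : ℝ := ct * ρ ^ (-(1:ℝ)/2) with ht_def
    have ht0 : 0 < t := mul_pos hct (Real.rpow_pos_of_pos hρ _)
    have hA : t ^ 2 * (c * (α2 - α1 * γ)) = γ * (1/ρ) := by
      have h1 : (ρ ^ (-(1:ℝ)/2)) ^ 2 = 1/ρ := by
        rw [← Real.rpow_natCast (ρ ^ (-(1:ℝ)/2)) 2, ← Real.rpow_mul hρ.le]
        norm_num [Real.rpow_neg_one, one_div]
      have h2 : ct ^ 2 = γ / (c * (α2 - α1 * γ)) := Real.sq_sqrt hctarg.le
      rw [ht_def, mul_pow, h1, h2]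
      field_simp
      exact div_self (ne_of_gt (by linarith))
    have hP : 0 < c * (α2 - α1 * γ) := mul_pos hc hcond
    ext z
    simp only [Set.mem_setOf_eq, Set.mem_Ioo]
    have hden : 0 < c * α1 * z ^ 2 + 1 / ρ := by positivity
    rw [div_lt_iff₀ hden]
    constructor
    · intro h
      have hz2 : z ^ 2 < t ^ 2 := by
        have key : z ^ 2 * (c * (α2 - α1 * γ)) < t ^ 2 * (c * (α2 - α1 * γ)) := by
          rw [hA]; nlinarith
        exact lt_of_mul_lt_mul_right key hP.le
      constructor <;> nlinarith
    · intro ⟨h1, h2⟩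
      have hz2 : z ^ 2 < t ^ 2 := by nlinarith
      have key : z ^ 2 * (c * (α2 - α1 * γ)) < γ * (1/ρ) := by
        rw [← hA]; nlinarith
      nlinarith
  -- eventual smallness
  have h0 : Tendsto (fun ρ : ℝ => ct * ρ ^ (-(1:ℝ)/2)) atTop (nhds 0) := by
    have h1 : Tendsto (fun ρ : ℝ => ρ ^ (-(1:ℝ)/2)) atTop (nhds 0) := by
      rw [show (-(1:ℝ)/2) = -(1/2) by norm_num]
      exact tendsto_rpow_neg_atTop (by norm_num)
    simpa using h1.const_mul ct
  have hev : ∀ᶠ ρ : ℝ in atTop, ct * ρ ^ (-(1:ℝ)/2) ≤ ε := by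
    filter_upwards [h0.eventually_lt_const hε] with ρ h using h.le
  -- Part 1
  have part1 : ∀ᶠ ρ : ℝ in atTop,
      (μ {z : ℝ | c * α2 * z ^ 2 / (c * α1 * z ^ 2 + 1 / ρ) < γ}).toReal
        = FZ (ct * ρ ^ (-(1:ℝ)/2)) := by
    filter_upwards [eventually_gt_atTop 0, hev] with ρ hρ hρε
    rw [hset ρ hρ]
    exact hIoo _ (mul_pos hct (Real.rpow_pos_of_pos hρ _)) hρε
  refine ⟨part1, ?_⟩
  -- Part 2
  have hba : b ^ a = (4 * ms * ml) ^ (ms * (K:ℝ)) := by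
    have hb2 : b ^ ((2:ℕ):ℝ) = 4 * ms * ml := by
      rw [Real.rpow_natCast]
      rw [hb_def]
      have := Real.sq_sqrt (le_of_lt (mul_pos hms hml))
      nlinarith [this]
    rw [show a = ((2:ℕ):ℝ) * (ms * (K:ℝ)) by push_cast [ha_def]; ring,
      Real.rpow_mul hb.le, hb2]
  have hDen : ∀ ρ : ℝ, 0 < ρ →
      mt ^ K * ct ^ a / Real.Gamma (a + 1) * ρ ^ (-(ms * (K:ℝ)))
        = C1 * ((b * (ct * ρ ^ (-(1:ℝ)/2))) ^ a / a) := by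
    intro ρ hρ
    have hta : ct ^ a * ρ ^ (-(ms * (K:ℝ))) = (ct * ρ ^ (-(1:ℝ)/2)) ^ a := by
      rw [Real.mul_rpow hct.le (Real.rpow_nonneg hρ.le _),
        ← Real.rpow_mul hρ.le]
      congr 2
      rw [ha_def]; ring
    have hxba : (b * (ct * ρ ^ (-(1:ℝ)/2))) ^ a = b ^ a * (ct * ρ ^ (-(1:ℝ)/2)) ^ a :=
      Real.mul_rpow hb.le (by positivity)
    have hGam : Real.Gamma (a + 1) = a * Real.Gamma a := Real.Gamma_add_one ha.ne'
    have hrpowinv : (4 * ms * ml) ^ (-(ms * (K:ℝ))) = (b ^ a)⁻¹ := by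
      rw [hba, ← Real.rpow_neg (by positivity)]
    rw [hC1_def, hGam, hxba, ← hta, hrpowinv]
    have hbapos : 0 < b ^ a := Real.rpow_pos_of_pos hb _
    field_simp
  -- squeeze
  have hexp : Tendsto (fun ρ : ℝ => Real.exp (-(b * (ct * ρ ^ (-(1:ℝ)/2))))) atTop (nhds 1) := by
    have h2 : Tendsto (fun ρ : ℝ => -(b * (ct * ρ ^ (-(1:ℝ)/2)))) atTop (nhds 0) := by
      have := (h0.const_mul b).neg
      simpa using this
    have := (Real.continuous_exp.tendsto 0).comp h2
    simpa [Function.comp_def] using this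
  apply tendsto_of_tendsto_of_tendsto_of_le_of_le' hexp tendsto_const_nhds
  · -- lower bound
    filter_upwards [eventually_gt_atTop 0, hev, part1] with ρ hρ hρε hp1
    set t : ℝ := ct * ρ ^ (-(1:ℝ)/2) with ht_def
    have ht0 : 0 < t := mul_pos hct (Real.rpow_pos_of_pos hρ _)
    have hx0 : 0 < b * t := by positivity
    have hD : 0 < C1 * ((b*t) ^ a / a) :=
      mul_pos hC1 (div_pos (Real.rpow_pos_of_pos hx0 _) ha)
    rw [hp1, hFZ' t, hDen ρ hρ, le_div_iff₀ hD]
    have hl := le_lowerGamma ha hx0.le (x := b*t)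
    calc Real.exp (-(b*t)) * (C1 * ((b*t) ^ a / a))
        = C1 * (Real.exp (-(b*t)) * ((b*t) ^ a / a)) := by ring
      _ ≤ C1 * lowerGamma a (b*t) := mul_le_mul_of_nonneg_left hl hC1.le
  · -- upper bound
    filter_upwards [eventually_gt_atTop 0, hev, part1] with ρ hρ hρε hp1
    set t : ℝ := ct * ρ ^ (-(1:ℝ)/2) with ht_def
    have ht0 : 0 < t := mul_pos hct (Real.rpow_pos_of_pos hρ _)
    have hx0 : 0 < b * t := by positivity
    have hD : 0 < C1 * ((b*t) ^ a / a) :=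
      mul_pos hC1 (div_pos (Real.rpow_pos_of_pos hx0 _) ha)
    rw [hp1, hFZ' t, hDen ρ hρ, div_le_one hD]
    have hu := lowerGamma_le ha hx0.le (x := b*t)
    exact mul_le_mul_of_nonneg_left hu hC1.le
end

section
/- Let X, Y be independent nonnegative random variables with Y ~ Exp(1) and X ~ χ'²₁(λ) having the series PDF f_X(x) = e^{-(x+λ)/2} Σ_{i=0}^∞ λ^i x^{i-1/2}/(i! 2^{2i+1/2} Γ(i+1/2)). For a, b, ρ', γ̃_N > 0, P( aY/(bX + 1/ρ') < γ̃_N ) = 1 - e^{-γ̃_N/(a ρ') - λ/2} Σ_{i=0}^∞ λ^i / ( i! 2^{2i+1/2} (b γ̃_N/a + 1/2)^{i+1/2} ). -/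
open MeasureTheory ProbabilityTheory Real

/-- Series PDF of the noncentral chi-square distribution χ'²₁(λ). -/
noncomputable def ncChiSqPDF (lam x : ℝ) : ℝ :=
  if 0 < x then Real.exp (-(x + lam) / 2) * ∑' i : ℕ,
      lam ^ i * x ^ ((i:ℝ) - 1/2)
        / ((i.factorial : ℝ) * 2 ^ (2 * (i:ℝ) + 1/2) * Real.Gamma ((i:ℝ) + 1/2))
  else 0

set_option maxHeartbeats 1000000

section ProofOfStmt15
open Set


lemma gamma_lb (i : ℕ) : (i.factorial : ℝ) / 2 ^ i ≤ Real.Gamma ((i:ℝ) + 1/2) := by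
  induction i with
  | zero =>
    simp only [Nat.factorial_zero, Nat.cast_one, pow_zero, div_one, Nat.cast_zero, zero_add]
    rw [Real.Gamma_one_half_eq]
    nlinarith [Real.sq_sqrt Real.pi_pos.le, Real.sqrt_nonneg π, Real.pi_gt_three]
  | succ n ih =>
    have h : ((n+1:ℕ):ℝ) + 1/2 = ((n:ℝ) + 1/2) + 1 := by push_cast; ring
    rw [h, Real.Gamma_add_one (by positivity)]
    have h2 : ((n+1).factorial : ℝ) / 2 ^ (n+1) = (((n:ℝ)+1)/2) * ((n.factorial : ℝ) / 2 ^ n) := by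
      rw [Nat.factorial_succ]; push_cast; ring
    rw [h2]
    have hg : (0:ℝ) ≤ (n.factorial : ℝ) / 2 ^ n := by positivity
    have : ((n:ℝ)+1)/2 ≤ (n:ℝ) + 1/2 := by linarith [Nat.cast_nonneg (α := ℝ) n]
    calc ((n:ℝ)+1)/2 * ((n.factorial : ℝ) / 2 ^ n) ≤ ((n:ℝ)+1/2) * ((n.factorial : ℝ) / 2 ^ n) := by
          apply mul_le_mul_of_nonneg_right this hg
      _ ≤ ((n:ℝ)+1/2) * Real.Gamma ((n:ℝ) + 1/2) := by
          apply mul_le_mul_of_nonneg_left ih (by positivity)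

lemma two_rpow_eq (i : ℕ) : (2:ℝ) ^ (2 * (i:ℝ) + 1/2) = 4 ^ i * Real.sqrt 2 := by
  rw [Real.rpow_add two_pos]
  have h1 : (2:ℝ) ^ (2 * (i:ℝ)) = 4 ^ i := by
    rw [show 2 * (i:ℝ) = ((2*i : ℕ):ℝ) by push_cast; ring, Real.rpow_natCast, pow_mul]
    norm_num
  rw [h1, Real.sqrt_eq_rpow]

lemma summable_pdf_series {lam x : ℝ} (hlam : 0 ≤ lam) (hx : 0 < x) :
    Summable (fun i : ℕ => lam ^ i * x ^ ((i:ℝ) - 1/2)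
        / ((i.factorial : ℝ) * 2 ^ (2 * (i:ℝ) + 1/2) * Real.Gamma ((i:ℝ) + 1/2))) := by
  apply Summable.of_nonneg_of_le (f := fun i => x ^ (-(1:ℝ)/2) * ((lam * x / 2) ^ i / i.factorial))
  · intro i; positivity
  · intro i
    have hxp : x ^ ((i:ℝ) - 1/2) = x ^ (-(1:ℝ)/2) * x ^ i := by
      rw [← Real.rpow_natCast x i, ← Real.rpow_add hx]; ring_nf
    have hgam := gamma_lb i
    have hfac : (1:ℝ) ≤ (i.factorial : ℝ) := by exact_mod_cast i.factorial_pos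
    have hden : (i.factorial : ℝ) * 2 ^ (i:ℕ) ≤
        (i.factorial : ℝ) * 2 ^ (2 * (i:ℝ) + 1/2) * Real.Gamma ((i:ℝ) + 1/2) := by
      rw [two_rpow_eq]
      have h4 : (4:ℝ) ^ i = 2^i * 2^i := by rw [← mul_pow]; norm_num
      have hs2 : (1:ℝ) ≤ Real.sqrt 2 := by
        rw [show (1:ℝ) = Real.sqrt 1 by simp]; exact Real.sqrt_le_sqrt (by norm_num)
      have hgam' : (1:ℝ) / 2^i ≤ Real.Gamma ((i:ℝ) + 1/2) :=
        le_trans (div_le_div_of_nonneg_right hfac (by positivity)) hgam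
      have h5 : (1:ℝ) ≤ Real.Gamma ((i:ℝ) + 1/2) * 2^i :=
        (div_le_iff₀ (by positivity)).mp hgam'
      have h6 : (1:ℝ) ≤ Real.sqrt 2 * (2^i * Real.Gamma ((i:ℝ) + 1/2)) := by
        nlinarith [Real.sqrt_nonneg 2]
      calc (i.factorial : ℝ) * 2 ^ i = (i.factorial : ℝ) * 2 ^ i * 1 := (mul_one _).symm
        _ ≤ (i.factorial : ℝ) * 2 ^ i * (Real.sqrt 2 * (2^i * Real.Gamma ((i:ℝ) + 1/2))) := by
            apply mul_le_mul_of_nonneg_left h6 (by positivity)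
        _ = (i.factorial : ℝ) * (4 ^ i * Real.sqrt 2) * Real.Gamma ((i:ℝ) + 1/2) := by
            rw [h4]; ring
    calc lam ^ i * x ^ ((i:ℝ) - 1/2)
          / ((i.factorial : ℝ) * 2 ^ (2 * (i:ℝ) + 1/2) * Real.Gamma ((i:ℝ) + 1/2))
        ≤ lam ^ i * x ^ ((i:ℝ) - 1/2) / ((i.factorial : ℝ) * 2 ^ (i:ℕ)) := by
          apply div_le_div_of_nonneg_left (by positivity) (by positivity) hden
      _ = x ^ (-(1:ℝ)/2) * ((lam * x / 2) ^ i / i.factorial) := by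
          have hfac0 : ((i.factorial : ℝ)) ≠ 0 := by positivity
          have h2i : ((2:ℝ)^i) ≠ 0 := by positivity
          rw [hxp, div_pow, mul_pow]
          field_simp
  · exact (Real.summable_pow_div_factorial (lam * x / 2)).mul_left _

lemma summable_target {lam c : ℝ} (hlam : 0 ≤ lam) (hc : 0 < c) :
    Summable (fun i : ℕ => lam ^ i / ((i.factorial : ℝ) * 2 ^ (2 * (i:ℝ) + 1/2)
        * (c + 1/2) ^ ((i:ℝ) + 1/2))) := by
  apply Summable.of_nonneg_of_le (f := fun i => (lam / 2) ^ i / i.factorial)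
  · intro i; positivity
  · intro i
    have hden : (i.factorial : ℝ) * 2 ^ (i:ℕ) ≤
        (i.factorial : ℝ) * 2 ^ (2 * (i:ℝ) + 1/2) * (c + 1/2) ^ ((i:ℝ) + 1/2) := by
      have h1 : ((1:ℝ)/2) ^ ((i:ℝ) + 1/2) ≤ (c + 1/2) ^ ((i:ℝ) + 1/2) :=
        Real.rpow_le_rpow (by norm_num) (by linarith) (by positivity)
      have h2 : (2:ℝ) ^ (2 * (i:ℝ) + 1/2) * ((1:ℝ)/2) ^ ((i:ℝ) + 1/2) = 2 ^ (i:ℕ) := by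
        rw [one_div, Real.inv_rpow two_pos.le, ← Real.rpow_neg two_pos.le,
          ← Real.rpow_add two_pos,
          show 2*(i:ℝ)+2⁻¹ + -((i:ℝ)+2⁻¹) = ((i:ℕ):ℝ) by push_cast; ring,
          Real.rpow_natCast]
      calc (i.factorial : ℝ) * 2 ^ (i:ℕ)
          = (i.factorial : ℝ) * (2 ^ (2 * (i:ℝ) + 1/2) * ((1:ℝ)/2) ^ ((i:ℝ) + 1/2)) := by rw [h2]
        _ ≤ (i.factorial : ℝ) * (2 ^ (2 * (i:ℝ) + 1/2) * (c + 1/2) ^ ((i:ℝ) + 1/2)) := by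
            apply mul_le_mul_of_nonneg_left _ (by positivity)
            apply mul_le_mul_of_nonneg_left h1 (by positivity)
        _ = (i.factorial : ℝ) * 2 ^ (2 * (i:ℝ) + 1/2) * (c + 1/2) ^ ((i:ℝ) + 1/2) := by ring
    calc lam ^ i / ((i.factorial : ℝ) * 2 ^ (2 * (i:ℝ) + 1/2) * (c + 1/2) ^ ((i:ℝ) + 1/2))
        ≤ lam ^ i / ((i.factorial : ℝ) * 2 ^ (i:ℕ)) := by
          apply div_le_div_of_nonneg_left (by positivity) (by positivity) hden
      _ = (lam / 2) ^ i / i.factorial := by rw [div_pow]; ring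
  · exact Real.summable_pow_div_factorial (lam / 2)

lemma setLIntegral_gammaPDF_Ioi {s r : ℝ} (hs : 0 < s) (hr : 0 < r) :
    ∫⁻ x in Ioi (0:ℝ), ProbabilityTheory.gammaPDF s r x = 1 := by
  have htot := ProbabilityTheory.lintegral_gammaPDF_eq_one hs hr
  rw [← lintegral_add_compl (ProbabilityTheory.gammaPDF s r) measurableSet_Ioi, compl_Ioi] at htot
  have hIic : ∫⁻ x in Iic (0:ℝ), ProbabilityTheory.gammaPDF s r x = 0 := by
    rw [Measure.restrict_congr_set Iio_ae_eq_Iic.symm,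
      setLIntegral_congr_fun measurableSet_Iio
        (fun y (hy : y < 0) => ProbabilityTheory.gammaPDF_of_neg hy),
      lintegral_zero]
  rw [hIic, add_zero] at htot
  exact htot

lemma lintegral_rpow_exp {s r : ℝ} (hs : 0 < s) (hr : 0 < r) :
    ∫⁻ x in Ioi (0:ℝ), ENNReal.ofReal (x ^ (s - 1) * Real.exp (-(r * x)))
      = ENNReal.ofReal (Real.Gamma s / r ^ s) := by
  have key : ∀ x ∈ Ioi (0:ℝ), ENNReal.ofReal (x ^ (s - 1) * Real.exp (-(r * x)))
      = ENNReal.ofReal (Real.Gamma s / r ^ s) * ProbabilityTheory.gammaPDF s r x := by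
    intro x hx
    rw [ProbabilityTheory.gammaPDF_of_nonneg (le_of_lt hx), ← ENNReal.ofReal_mul (by positivity)]
    congr 1
    have hΓ : Real.Gamma s ≠ 0 := (Real.Gamma_pos_of_pos hs).ne'
    have hrs : (r:ℝ) ^ s ≠ 0 := (Real.rpow_pos_of_pos hr s).ne'
    field_simp
  rw [setLIntegral_congr_fun measurableSet_Ioi key, lintegral_const_mul' _ _
    ENNReal.ofReal_ne_top, setLIntegral_gammaPDF_Ioi hs hr, mul_one]

lemma expMeasure1_Ici {t : ℝ} (ht : 0 ≤ t) : expMeasure1 (Ici t) = ENNReal.ofReal (Real.exp (-t)) := by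
  rw [expMeasure1, withDensity_apply _ measurableSet_Ici]
  rw [setLIntegral_congr_fun measurableSet_Ici
    (fun y (hy : t ≤ y) => by rw [if_pos (le_trans ht hy)])]
  rw [Measure.restrict_congr_set Ioi_ae_eq_Ici.symm]
  have hint : IntegrableOn (fun y => Real.exp (-y)) (Ioi t) := by
    simpa using exp_neg_integrableOn_Ioi t one_pos
  rw [← ofReal_integral_eq_lintegral_ofReal hint (ae_of_all _ (fun y => (Real.exp_pos _).le)),
    integral_exp_neg_Ioi]

/-- Uplink NOMA outage probability of the near user: with Y ~ Exp(1) and X ~ χ'²₁(λ)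
independent, P(aY/(bX + 1/ρ') < γ̃_N) = 1 - e^(-γ̃_N/(aρ') - λ/2) Σᵢ λ^i /
(i! 2^(2i+1/2) (bγ̃_N/a + 1/2)^(i+1/2)). -/
theorem stmt_15 {Ω : Type*} [MeasurableSpace Ω] (μ : Measure Ω) [IsProbabilityMeasure μ]
    (X Y : Ω → ℝ) (hX : Measurable X) (hY : Measurable Y) (hindep : IndepFun X Y μ)
    (lam a b ρ' γN : ℝ) (hlam : 0 < lam) (ha : 0 < a) (hb : 0 < b) (hρ : 0 < ρ') (hγ : 0 < γN)
    (hlawY : μ.map Y = expMeasure1)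
    (hlawX : μ.map X = MeasureTheory.volume.withDensity fun x => ENNReal.ofReal (ncChiSqPDF lam x)) :
    (μ {ω | a * Y ω / (b * X ω + 1 / ρ') < γN}).toReal
      = 1 - Real.exp (-(γN / (a * ρ')) - lam / 2) * ∑' i : ℕ,
          lam ^ i / ((i.factorial : ℝ) * 2 ^ (2 * (i:ℝ) + 1/2)
            * (b * γN / a + 1/2) ^ ((i:ℝ) + 1/2)) := by
  set c := b * γN / a with hc_def
  set d := γN / (a * ρ') with hd_def
  have hc : 0 < c := by positivity
  have hd : 0 < d := by positivity
  set F : ℕ → ℝ → ℝ := fun i x => lam ^ i * x ^ ((i:ℝ) - 1/2)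
      / ((i.factorial : ℝ) * 2 ^ (2 * (i:ℝ) + 1/2) * Real.Gamma ((i:ℝ) + 1/2)) with hF_def
  set S : Set (ℝ × ℝ) := {p | a * p.2 / (b * p.1 + 1 / ρ') < γN} with hS_def
  have hSm : MeasurableSet S := by
    apply measurableSet_lt _ measurable_const
    fun_prop
  set νX : Measure ℝ := volume.withDensity fun x => ENNReal.ofReal (ncChiSqPDF lam x) with hνX
  haveI hXprob : IsProbabilityMeasure νX := hlawX ▸ Measure.isProbabilityMeasure_map hX.aemeasurable
  haveI hYprob : IsProbabilityMeasure expMeasure1 := hlawY ▸ Measure.isProbabilityMeasure_map hY.aemeasurable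
  have hmap : μ.map (fun ω => (X ω, Y ω)) = νX.prod expMeasure1 := by
    rw [(indepFun_iff_map_prod_eq_prod_map_map hX.aemeasurable hY.aemeasurable).mp hindep,
      hlawX, hlawY]
  have h1 : μ {ω | a * Y ω / (b * X ω + 1 / ρ') < γN} = (νX.prod expMeasure1) S := by
    rw [← hmap, Measure.map_apply (hX.prodMk hY) hSm]
    rfl
  have h2 : (νX.prod expMeasure1) S = 1 - (νX.prod expMeasure1) Sᶜ := by
    rw [prob_compl_eq_one_sub hSm, ENNReal.sub_sub_cancel ENNReal.one_ne_top prob_le_one]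
  have h3 : (νX.prod expMeasure1) Sᶜ = ∫⁻ x, expMeasure1 (Prod.mk x ⁻¹' Sᶜ) ∂νX :=
    Measure.prod_apply hSm.compl
  -- density measurability
  have hdens_eq : (fun x => ENNReal.ofReal (ncChiSqPDF lam x))
      = fun x => (Ioi (0:ℝ)).indicator
          (fun x => ∑' i : ℕ, ENNReal.ofReal (Real.exp (-(x + lam)/2) * F i x)) x := by
    funext x
    by_cases hx : 0 < x
    · have hFnn : ∀ i : ℕ, 0 ≤ F i x := fun i =>
        div_nonneg (mul_nonneg (pow_nonneg hlam.le i) (Real.rpow_nonneg hx.le _))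
          (by positivity)
      rw [indicator_of_mem (mem_Ioi.mpr hx), ncChiSqPDF, if_pos hx,
        ← ENNReal.ofReal_tsum_of_nonneg (fun i => mul_nonneg (Real.exp_pos _).le (hFnn i))
          ((summable_pdf_series hlam.le hx).mul_left _), tsum_mul_left]
    · rw [indicator_of_notMem (fun h => hx (mem_Ioi.mp h)), ncChiSqPDF, if_neg hx]
      simp
  have hdens_meas : Measurable (fun x => ENNReal.ofReal (ncChiSqPDF lam x)) := by
    rw [hdens_eq]
    exact (Measurable.ennreal_tsum (fun i => by fun_prop)).indicator measurableSet_Ioi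
  have hg_meas : Measurable (fun x => expMeasure1 (Prod.mk x ⁻¹' Sᶜ)) :=
    measurable_measure_prodMk_left hSm.compl
  have h4 : ∫⁻ x, expMeasure1 (Prod.mk x ⁻¹' Sᶜ) ∂νX
      = ∫⁻ x, ENNReal.ofReal (ncChiSqPDF lam x) * expMeasure1 (Prod.mk x ⁻¹' Sᶜ) ∂volume := by
    rw [hνX, lintegral_withDensity_eq_lintegral_mul volume hdens_meas hg_meas]
    rfl
  -- pointwise computation
  have hpt : ∀ x : ℝ, ENNReal.ofReal (ncChiSqPDF lam x) * expMeasure1 (Prod.mk x ⁻¹' Sᶜ)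
      = (Ioi (0:ℝ)).indicator (fun x => ∑' i : ℕ, ENNReal.ofReal
          ((Real.exp (-d - lam/2) * (lam ^ i / ((i.factorial : ℝ) * 2 ^ (2 * (i:ℝ) + 1/2)
            * Real.Gamma ((i:ℝ) + 1/2))))
          * (x ^ (((i:ℝ) + 1/2) - 1) * Real.exp (-((c + 1/2) * x))))) x := by
    intro x
    by_cases hx : 0 < x
    · have hFnn : ∀ i : ℕ, 0 ≤ F i x := fun i =>
        div_nonneg (mul_nonneg (pow_nonneg hlam.le i) (Real.rpow_nonneg hx.le _))
          (by positivity)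
      have hDx : 0 < b * x + 1 / ρ' := by positivity
      have hset : Prod.mk x ⁻¹' Sᶜ = Ici (c * x + d) := by
        ext y
        simp only [mem_preimage, mem_compl_iff, hS_def, mem_setOf_eq, not_lt, mem_Ici]
        have he : c * x + d = γN * (b * x + 1 / ρ') / a := by
          rw [hc_def, hd_def]; field_simp
        rw [he, le_div_iff₀ hDx, div_le_iff₀ ha]
        constructor <;> intro h <;> nlinarith
      rw [indicator_of_mem (mem_Ioi.mpr hx), hset, expMeasure1_Ici (by positivity), ncChiSqPDF, if_pos hx]
      rw [← ENNReal.ofReal_mul (mul_nonneg (Real.exp_pos _).le (tsum_nonneg hFnn))]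
      have h5 : (Real.exp (-(x + lam)/2) * ∑' i, F i x) * Real.exp (-(c * x + d))
          = ∑' i : ℕ, (Real.exp (-(x + lam)/2) * Real.exp (-(c * x + d))) * F i x := by
        rw [tsum_mul_left]; ring
      rw [h5, ENNReal.ofReal_tsum_of_nonneg
        (fun i => mul_nonneg (mul_nonneg (Real.exp_pos _).le (Real.exp_pos _).le) (hFnn i))
        ((summable_pdf_series hlam.le hx).mul_left _)]
      refine tsum_congr fun i => ?_
      congr 1
      have hexp : Real.exp (-(x + lam)/2) * Real.exp (-(c * x + d))
          = Real.exp (-d - lam/2) * Real.exp (-((c + 1/2) * x)) := by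
        rw [← Real.exp_add, ← Real.exp_add]; congr 1; ring
      rw [hexp, hF_def, show ((i:ℝ) + 1/2) - 1 = (i:ℝ) - 1/2 by ring]
      ring
    · rw [indicator_of_notMem (fun h => hx (mem_Ioi.mp h)), ncChiSqPDF, if_neg hx]
      simp
  -- main integral computation
  have hK : ∀ i : ℕ, 0 ≤ Real.exp (-d - lam/2) * (lam ^ i / ((i.factorial : ℝ)
      * 2 ^ (2 * (i:ℝ) + 1/2) * Real.Gamma ((i:ℝ) + 1/2))) := fun i => by positivity
  have hI : ∫⁻ x, ENNReal.ofReal (ncChiSqPDF lam x) * expMeasure1 (Prod.mk x ⁻¹' Sᶜ) ∂volume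
      = ENNReal.ofReal (Real.exp (-d - lam/2) * ∑' i : ℕ,
          lam ^ i / ((i.factorial : ℝ) * 2 ^ (2 * (i:ℝ) + 1/2)
            * (c + 1/2) ^ ((i:ℝ) + 1/2))) := by
    simp_rw [hpt]
    rw [lintegral_indicator measurableSet_Ioi _,
      lintegral_tsum (fun i => (Measurable.aemeasurable (by fun_prop)))]
    have hterm : ∀ i : ℕ, ∫⁻ x in Ioi (0:ℝ), ENNReal.ofReal
        ((Real.exp (-d - lam/2) * (lam ^ i / ((i.factorial : ℝ) * 2 ^ (2 * (i:ℝ) + 1/2)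
          * Real.Gamma ((i:ℝ) + 1/2))))
        * (x ^ (((i:ℝ) + 1/2) - 1) * Real.exp (-((c + 1/2) * x))))
        = ENNReal.ofReal (Real.exp (-d - lam/2) * (lam ^ i / ((i.factorial : ℝ)
            * 2 ^ (2 * (i:ℝ) + 1/2) * (c + 1/2) ^ ((i:ℝ) + 1/2)))) := by
      intro i
      simp_rw [ENNReal.ofReal_mul (hK i)]
      rw [lintegral_const_mul' _ _ ENNReal.ofReal_ne_top,
        lintegral_rpow_exp (by positivity) (by positivity),
        ← ENNReal.ofReal_mul (hK i)]
      congr 1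
      have hΓ : Real.Gamma ((i:ℝ) + 1/2) ≠ 0 := (Real.Gamma_pos_of_pos (by positivity)).ne'
      have hrs : (c + 1/2) ^ ((i:ℝ) + 1/2) ≠ 0 := (Real.rpow_pos_of_pos (by positivity) _).ne'
      have h2r : ((2:ℝ)) ^ (2 * (i:ℝ) + 1/2) ≠ 0 := (Real.rpow_pos_of_pos two_pos _).ne'
      have hfac : ((i.factorial : ℝ)) ≠ 0 := by positivity
      field_simp
    simp_rw [hterm]
    rw [← ENNReal.ofReal_tsum_of_nonneg (fun i => by positivity)
      ((summable_target hlam.le hc).mul_left _), tsum_mul_left]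
  -- conclusion
  have hchain : (νX.prod expMeasure1) Sᶜ = ENNReal.ofReal (Real.exp (-d - lam/2) * ∑' i : ℕ,
      lam ^ i / ((i.factorial : ℝ) * 2 ^ (2 * (i:ℝ) + 1/2)
        * (c + 1/2) ^ ((i:ℝ) + 1/2))) := by rw [h3, h4, hI]
  have hle : ENNReal.ofReal (Real.exp (-d - lam/2) * ∑' i : ℕ,
      lam ^ i / ((i.factorial : ℝ) * 2 ^ (2 * (i:ℝ) + 1/2)
        * (c + 1/2) ^ ((i:ℝ) + 1/2))) ≤ 1 := hchain ▸ prob_le_one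
  have hnn : 0 ≤ Real.exp (-d - lam/2) * ∑' i : ℕ,
      lam ^ i / ((i.factorial : ℝ) * 2 ^ (2 * (i:ℝ) + 1/2)
        * (c + 1/2) ^ ((i:ℝ) + 1/2)) :=
    mul_nonneg (Real.exp_pos _).le (tsum_nonneg fun i => by positivity)
  rw [h1, h2, hchain, ENNReal.toReal_sub_of_le hle ENNReal.one_ne_top, ENNReal.toReal_one,
    ENNReal.toReal_ofReal hnn]

end ProofOfStmt15
end

section
/- Fix λ > 0, a, b, γ̃_N, γ̃_F > 0. Define P_F(ρ') = 1 - e^{-γ̃_N/(a ρ') - λ/2} Σ_{i=0}^∞ λ^i Γ(i+1/2, γ̃_N γ̃_F/(a ρ') + γ̃_F/(2 b ρ')) / ( i! 2^{2i+1/2} (b γ̃_N/a + 1/2)^{i+1/2} Γ(i+1/2) ). Then lim_{ρ' → ∞} P_F(ρ') = 1 - e^{-λ/2} Σ_{i=0}^∞ λ^i / ( i! 2^{2i+1/2} (b γ̃_N/a + 1/2)^{i+1/2} ), which is strictly positive; hence the uplink NOMA outage probability converges to a nonzero floor and the diversity order is 0. -/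
open MeasureTheory Real Filter

/-- Upper incomplete gamma function Γ(s,x) = ∫ₓ^∞ u^(s-1) e^(-u) du. -/
noncomputable def upperGamma (s x : ℝ) : ℝ := ∫ u in Set.Ioi x, u ^ (s - 1) * Real.exp (-u)

lemma ug_integrableOn {s : ℝ} (hs : 0 < s) :
    IntegrableOn (fun u : ℝ => u ^ (s - 1) * Real.exp (-u)) (Set.Ioi 0) :=
  (Real.GammaIntegral_convergent hs).congr_fun (fun x _ => mul_comm _ _) measurableSet_Ioi

lemma ug_zero {s : ℝ} (hs : 0 < s) : upperGamma s 0 = Real.Gamma s := by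
  rw [upperGamma, Real.Gamma_eq_integral hs]
  exact setIntegral_congr_fun measurableSet_Ioi (fun x _ => mul_comm _ _)

lemma ug_nonneg {s x : ℝ} (hx : 0 ≤ x) : 0 ≤ upperGamma s x :=
  setIntegral_nonneg measurableSet_Ioi fun u hu =>
    mul_nonneg (Real.rpow_nonneg (hx.trans hu.le) _) (Real.exp_pos _).le

lemma ug_le {s x : ℝ} (hs : 0 < s) (hx : 0 ≤ x) : upperGamma s x ≤ Real.Gamma s := by
  rw [← ug_zero hs]
  refine setIntegral_mono_set (ug_integrableOn hs) ?_
    (HasSubset.Subset.eventuallyLE (Set.Ioi_subset_Ioi hx))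
  refine (ae_restrict_iff' measurableSet_Ioi).2 (ae_of_all _ fun u hu => ?_)
  exact mul_nonneg (Real.rpow_nonneg (le_of_lt hu) _) (Real.exp_pos _).le

open intervalIntegral in
lemma ug_tendsto {s : ℝ} (hs : 0 < s) :
    Tendsto (fun x => upperGamma s x) (nhdsWithin 0 (Set.Ioi 0)) (nhds (Real.Gamma s)) := by
  have key : ∀ x ∈ Set.Ioi (0:ℝ), Real.Gamma s - x ^ s / s ≤ upperGamma s x := by
    intro x hx
    have hx0 : (0:ℝ) < x := hx
    have hioc : IntegrableOn (fun u : ℝ => u ^ (s - 1) * Real.exp (-u)) (Set.Ioc 0 x) :=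
      (ug_integrableOn hs).mono_set Set.Ioc_subset_Ioi_self
    have hsplit : Real.Gamma s =
        (∫ u in Set.Ioc 0 x, u ^ (s - 1) * Real.exp (-u)) + upperGamma s x := by
      rw [← ug_zero hs, upperGamma, ← Set.Ioc_union_Ioi_eq_Ioi hx0.le,
        setIntegral_union (Set.Ioc_disjoint_Ioi le_rfl) measurableSet_Ioi hioc
          ((ug_integrableOn hs).mono_set (Set.Ioi_subset_Ioi hx0.le))]
      rfl
    have hr : IntervalIntegrable (fun u : ℝ => u ^ (s - 1)) volume 0 x :=
      intervalIntegrable_rpow' (by linarith)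
    have hriop : IntegrableOn (fun u : ℝ => u ^ (s - 1)) (Set.Ioc 0 x) :=
      (intervalIntegrable_iff_integrableOn_Ioc_of_le hx0.le).1 hr
    have hb : (∫ u in Set.Ioc 0 x, u ^ (s - 1) * Real.exp (-u)) ≤ x ^ s / s := by
      have h1 : (∫ u in Set.Ioc 0 x, u ^ (s - 1) * Real.exp (-u))
          ≤ ∫ u in Set.Ioc 0 x, u ^ (s - 1) := by
        refine setIntegral_mono_on hioc hriop measurableSet_Ioc fun u hu => ?_
        have hu0 : 0 ≤ u ^ (s - 1) := Real.rpow_nonneg hu.1.le _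
        nlinarith [Real.exp_le_one_iff.2 (neg_nonpos.2 hu.1.le), Real.exp_pos (-u)]
      have h2 : (∫ u in Set.Ioc 0 x, u ^ (s - 1)) = x ^ s / s := by
        rw [← integral_of_le hx0.le, integral_rpow (Or.inl (by linarith))]
        rw [Real.zero_rpow (by linarith : s - 1 + 1 ≠ 0)]
        simp [sub_add_cancel]
      linarith
    linarith [hsplit, hb]
  have hub : ∀ x ∈ Set.Ioi (0:ℝ), upperGamma s x ≤ Real.Gamma s := fun x hx =>
    ug_le hs (le_of_lt hx)
  have hlow : Tendsto (fun x : ℝ => Real.Gamma s - x ^ s / s)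
      (nhdsWithin 0 (Set.Ioi 0)) (nhds (Real.Gamma s)) := by
    have hpow : Tendsto (fun x : ℝ => x ^ s) (nhds 0) (nhds 0) := by
      have := (Real.continuousAt_rpow_const 0 s (Or.inr hs.le)).tendsto
      rwa [Real.zero_rpow hs.ne'] at this
    have : Tendsto (fun x : ℝ => Real.Gamma s - x ^ s / s) (nhds 0)
        (nhds (Real.Gamma s - 0 / s)) :=
      tendsto_const_nhds.sub (hpow.div_const s)
    simpa using this.mono_left nhdsWithin_le_nhds
  refine tendsto_of_tendsto_of_tendsto_of_le_of_le' hlow tendsto_const_nhds ?_ ?_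
  · exact eventually_nhdsWithin_of_forall key
  · exact eventually_nhdsWithin_of_forall hub

/-- The uplink NOMA outage probability P_F(ρ') converges, as ρ' → ∞, to the strictly
positive floor 1 - e^(-λ/2) Σᵢ λ^i/(i! 2^(2i+1/2)(bγ̃_N/a + 1/2)^(i+1/2)); hence the
diversity order is 0. -/
theorem stmt_17 (lam a b γN γF : ℝ) (hlam : 0 < lam) (ha : 0 < a) (hb : 0 < b)
    (hγN : 0 < γN) (hγF : 0 < γF) :
    Tendsto (fun ρ' : ℝ => 1 - Real.exp (-(γN / (a * ρ')) - lam / 2) * ∑' i : ℕ,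
        lam ^ i * upperGamma ((i:ℝ) + 1/2) (γN * γF / (a * ρ') + γF / (2 * b * ρ'))
          / ((i.factorial : ℝ) * 2 ^ (2 * (i:ℝ) + 1/2) * (b * γN / a + 1/2) ^ ((i:ℝ) + 1/2)
              * Real.Gamma ((i:ℝ) + 1/2)))
      atTop
      (nhds (1 - Real.exp (-lam / 2) * ∑' i : ℕ,
        lam ^ i / ((i.factorial : ℝ) * 2 ^ (2 * (i:ℝ) + 1/2)
          * (b * γN / a + 1/2) ^ ((i:ℝ) + 1/2)))) ∧
    0 < 1 - Real.exp (-lam / 2) * ∑' i : ℕ,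
        lam ^ i / ((i.factorial : ℝ) * 2 ^ (2 * (i:ℝ) + 1/2)
          * (b * γN / a + 1/2) ^ ((i:ℝ) + 1/2)) := by
  set c : ℝ := b * γN / a + 1/2 with hc_def
  clear_value c
  have hc0 : (1:ℝ)/2 < c := by
    have h : 0 < b * γN / a := by positivity
    rw [hc_def]; linarith
  have hcpos : 0 < c := by linarith
  set K : ℝ := (2 * c) ^ ((1:ℝ)/2) with hK_def
  clear_value K
  have hKpos : 0 < K := hK_def ▸ Real.rpow_pos_of_pos (by linarith) _
  have hK1 : 1 < K := by
    rw [hK_def]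
    exact (Real.one_lt_rpow_iff_of_pos (by linarith)).2 (Or.inl ⟨by linarith, by norm_num⟩)
  -- key rewriting of the denominator
  have hD : ∀ i : ℕ, (2:ℝ) ^ (2 * (i:ℝ) + 1/2) * c ^ ((i:ℝ) + 1/2) = (4 * c) ^ i * K := by
    intro i
    rw [Real.rpow_add two_pos, Real.rpow_add hcpos,
      show (2:ℝ) * (i:ℝ) = ((2 * i : ℕ) : ℝ) by push_cast; ring,
      Real.rpow_natCast, Real.rpow_natCast, pow_mul, hK_def,
      Real.mul_rpow (by norm_num) hcpos.le, mul_pow]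
    ring
  -- the limiting terms
  have hterm : ∀ i : ℕ,
      lam ^ i / ((i.factorial : ℝ) * 2 ^ (2 * (i:ℝ) + 1/2) * c ^ ((i:ℝ) + 1/2))
        = (lam / (4 * c)) ^ i / (i.factorial : ℝ) / K := by
    intro i
    rw [mul_assoc, hD i, div_pow]
    have h4 : (0:ℝ) < (4 * c) ^ i := by positivity
    have hf : (0:ℝ) < (i.factorial : ℝ) := Nat.cast_pos.2 i.factorial_pos
    field_simp
  have hsum : Summable (fun i : ℕ =>
      lam ^ i / ((i.factorial : ℝ) * 2 ^ (2 * (i:ℝ) + 1/2) * c ^ ((i:ℝ) + 1/2))) := by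
    refine Summable.congr ((Real.summable_pow_div_factorial (lam / (4 * c))).div_const K) ?_
    intro i; exact (hterm i).symm
  have htsum : (∑' i : ℕ,
      lam ^ i / ((i.factorial : ℝ) * 2 ^ (2 * (i:ℝ) + 1/2) * c ^ ((i:ℝ) + 1/2)))
        = Real.exp (lam / (4 * c)) / K := by
    rw [tsum_congr hterm, tsum_div_const]
    congr 1
    rw [Real.exp_eq_exp_ℝ, NormedSpace.exp_eq_tsum_div]
  -- positivity of the floor
  have hfloor : 0 < 1 - Real.exp (-lam / 2) * ∑' i : ℕ,
      lam ^ i / ((i.factorial : ℝ) * 2 ^ (2 * (i:ℝ) + 1/2) * c ^ ((i:ℝ) + 1/2)) := by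
    rw [htsum]
    have hle : lam / (4 * c) ≤ lam / 2 := by gcongr <;> linarith
    have : Real.exp (-lam / 2) * (Real.exp (lam / (4 * c)) / K)
        = Real.exp (lam / (4 * c) + -lam / 2) / K := by
      rw [Real.exp_add]; ring
    rw [this]
    have h1 : Real.exp (lam / (4 * c) + -lam / 2) ≤ 1 := by
      rw [Real.exp_le_one_iff]; linarith
    have : Real.exp (lam / (4 * c) + -lam / 2) / K < 1 := by
      rw [div_lt_one hKpos]; linarith
    linarith
  constructor
  · -- the limit
    have hE : Tendsto (fun ρ' : ℝ => Real.exp (-(γN / (a * ρ')) - lam / 2)) atTop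
        (nhds (Real.exp (-lam / 2))) := by
      have hmul : Tendsto (fun ρ' : ℝ => a * ρ') atTop atTop :=
        Tendsto.const_mul_atTop ha tendsto_id
      have h0 : Tendsto (fun ρ' : ℝ => γN / (a * ρ')) atTop (nhds 0) :=
        Tendsto.div_atTop tendsto_const_nhds hmul
      have : Tendsto (fun ρ' : ℝ => -(γN / (a * ρ')) - lam / 2) atTop
          (nhds (-0 - lam / 2)) := (h0.neg).sub_const _
      have := (Real.continuous_exp.tendsto _).comp this
      simpa [Function.comp_def, neg_div] using this
    have hxpos : ∀ᶠ ρ' : ℝ in atTop, 0 < γN * γF / (a * ρ') + γF / (2 * b * ρ') := by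
      filter_upwards [eventually_gt_atTop (0:ℝ)] with ρ' hρ
      positivity
    have hx0 : Tendsto (fun ρ' : ℝ => γN * γF / (a * ρ') + γF / (2 * b * ρ')) atTop
        (nhdsWithin 0 (Set.Ioi 0)) := by
      refine tendsto_nhdsWithin_of_tendsto_nhds_of_eventually_within _ ?_ hxpos
      have h1 : Tendsto (fun ρ' : ℝ => γN * γF / (a * ρ')) atTop (nhds 0) :=
        Tendsto.div_atTop tendsto_const_nhds (Tendsto.const_mul_atTop ha tendsto_id)
      have h2 : Tendsto (fun ρ' : ℝ => γF / (2 * b * ρ')) atTop (nhds 0) :=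
        Tendsto.div_atTop tendsto_const_nhds
          (Tendsto.const_mul_atTop (by linarith) tendsto_id)
      simpa using h1.add h2
    have hT : Tendsto (fun ρ' : ℝ => ∑' i : ℕ,
        lam ^ i * upperGamma ((i:ℝ) + 1/2) (γN * γF / (a * ρ') + γF / (2 * b * ρ'))
          / ((i.factorial : ℝ) * 2 ^ (2 * (i:ℝ) + 1/2) * c ^ ((i:ℝ) + 1/2)
              * Real.Gamma ((i:ℝ) + 1/2))) atTop
        (nhds (∑' i : ℕ,
          lam ^ i / ((i.factorial : ℝ) * 2 ^ (2 * (i:ℝ) + 1/2) * c ^ ((i:ℝ) + 1/2)))) := by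
      refine tendsto_tsum_of_dominated_convergence hsum ?_ ?_
      · intro i
        have hsi : (0:ℝ) < (i:ℝ) + 1/2 := by positivity
        have hΓ : 0 < Real.Gamma ((i:ℝ) + 1/2) := Real.Gamma_pos_of_pos hsi
        have hcomp := (ug_tendsto hsi).comp hx0
        have h1 := ((hcomp.const_mul (lam ^ i)).div_const
          ((i.factorial : ℝ) * 2 ^ (2 * (i:ℝ) + 1/2) * c ^ ((i:ℝ) + 1/2)
            * Real.Gamma ((i:ℝ) + 1/2)))
        have hDpos : (0:ℝ) < (i.factorial : ℝ) * 2 ^ (2 * (i:ℝ) + 1/2)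
            * c ^ ((i:ℝ) + 1/2) := by
          have hfpos : (0:ℝ) < (i.factorial : ℝ) := Nat.cast_pos.2 i.factorial_pos
          have h2p : (0:ℝ) < (2:ℝ) ^ (2 * (i:ℝ) + 1/2) := Real.rpow_pos_of_pos two_pos _
          have hcp : (0:ℝ) < c ^ ((i:ℝ) + 1/2) := Real.rpow_pos_of_pos hcpos _
          positivity
        have heq : lam ^ i * Real.Gamma ((i:ℝ) + 1/2)
            / ((i.factorial : ℝ) * 2 ^ (2 * (i:ℝ) + 1/2) * c ^ ((i:ℝ) + 1/2)
                * Real.Gamma ((i:ℝ) + 1/2))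
            = lam ^ i / ((i.factorial : ℝ) * 2 ^ (2 * (i:ℝ) + 1/2) * c ^ ((i:ℝ) + 1/2)) := by
          rw [eq_div_iff hDpos.ne', div_mul_eq_mul_div,
            div_eq_iff (by positivity : ((i.factorial : ℝ) * 2 ^ (2 * (i:ℝ) + 1/2)
              * c ^ ((i:ℝ) + 1/2) * Real.Gamma ((i:ℝ) + 1/2)) ≠ 0)]
          ring
        rw [← heq]
        exact h1
      · filter_upwards [eventually_gt_atTop (0:ℝ)] with ρ' hρ
        intro i
        have hsi : (0:ℝ) < (i:ℝ) + 1/2 := by positivity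
        have hΓ : 0 < Real.Gamma ((i:ℝ) + 1/2) := Real.Gamma_pos_of_pos hsi
        have hxnn : (0:ℝ) ≤ γN * γF / (a * ρ') + γF / (2 * b * ρ') := by positivity
        have hfpos : (0:ℝ) < (i.factorial : ℝ) := Nat.cast_pos.2 i.factorial_pos
        have h2p : (0:ℝ) < (2:ℝ) ^ (2 * (i:ℝ) + 1/2) := Real.rpow_pos_of_pos two_pos _
        have hcp : (0:ℝ) < c ^ ((i:ℝ) + 1/2) := Real.rpow_pos_of_pos hcpos _
        have hDpos : (0:ℝ) < (i.factorial : ℝ) * 2 ^ (2 * (i:ℝ) + 1/2)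
            * c ^ ((i:ℝ) + 1/2) := by positivity
        have hU0 : 0 ≤ upperGamma ((i:ℝ) + 1/2) (γN * γF / (a * ρ') + γF / (2 * b * ρ')) :=
          ug_nonneg hxnn
        have hUle : upperGamma ((i:ℝ) + 1/2) (γN * γF / (a * ρ') + γF / (2 * b * ρ'))
            ≤ Real.Gamma ((i:ℝ) + 1/2) := ug_le hsi hxnn
        rw [Real.norm_eq_abs, abs_of_nonneg (by positivity)]
        have step : lam ^ i * upperGamma ((i:ℝ) + 1/2) (γN * γF / (a * ρ') + γF / (2 * b * ρ'))
            / ((i.factorial : ℝ) * 2 ^ (2 * (i:ℝ) + 1/2) * c ^ ((i:ℝ) + 1/2)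
                * Real.Gamma ((i:ℝ) + 1/2))
            ≤ lam ^ i * Real.Gamma ((i:ℝ) + 1/2)
            / ((i.factorial : ℝ) * 2 ^ (2 * (i:ℝ) + 1/2) * c ^ ((i:ℝ) + 1/2)
                * Real.Gamma ((i:ℝ) + 1/2)) := by
          gcongr
        refine step.trans (le_of_eq ?_)
        rw [eq_div_iff hDpos.ne', div_mul_eq_mul_div,
          div_eq_iff (by positivity : ((i.factorial : ℝ) * 2 ^ (2 * (i:ℝ) + 1/2)
            * c ^ ((i:ℝ) + 1/2) * Real.Gamma ((i:ℝ) + 1/2)) ≠ 0)]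
        ring
    exact (hE.mul hT).const_sub 1
  · exact hfloor
end
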